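/- Suppose ρ ≥ 1 and the invariant measure is not summable, i.e. S_π(N) → ∞ as N → ∞. Then lim_{N→∞} S_π(N)·(P_loss(N) − (1 − 1/ρ)) = E[V]π₀ / (ρ E[S] (1−ν₀)). -/

import Mathlib

open MeasureTheory Filter Set Topology Asymptotics
open scoped ENNReal

noncomputable section

/-- Laplace-transform value `F*(λ − λz) = ∫ e^{−(λ−λz)t} dF(t)` (Bochner integral). -/
def qLap (μ : Measure ℝ) (lam z : ℝ) : ℝ := ∫ t, Real.exp (-(lam - lam * z) * t) ∂μ

/-- Derivative value `F*'(λ − λz) = ∫ λ t e^{−(λ−λz)t} dF(t)`. -/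
def qLapD (μ : Measure ℝ) (lam z : ℝ) : ℝ := ∫ t, lam * t * Real.exp (-(lam - lam * z) * t) ∂μ

/-- Laplace-transform value as a lower integral in `ℝ≥0∞` (possibly `+∞`). -/
def qLapE (μ : Measure ℝ) (lam z : ℝ) : ℝ≥0∞ :=
  ∫⁻ t, ENNReal.ofReal (Real.exp (-(lam - lam * z) * t)) ∂μ

/-- `R` is the leftmost (real) singular point of `z ↦ F*(λ − λz)`:
`∫ e^{λ(r−1)t} dF(t)` converges for `1 ≤ r < R` and diverges for `r > R`. -/
def qAbscissa (μ : Measure ℝ) (lam R : ℝ) : Prop :=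
  1 ≤ R ∧ (∀ r : ℝ, 1 ≤ r → r < R → Integrable (fun t => Real.exp (lam * (r - 1) * t)) μ) ∧
    (∀ r : ℝ, R < r → ¬ Integrable (fun t => Real.exp (lam * (r - 1) * t)) μ)

/-- `a_j` (resp. `ν_j`): probability that `j` Poisson(λ) arrivals occur during a
time distributed according to `μ`. -/
def qCoef (μ : Measure ℝ) (lam : ℝ) (j : ℕ) : ℝ :=
  ∫ t, (lam * t) ^ j / (Nat.factorial j : ℝ) * Real.exp (-lam * t) ∂μ

/-- `b_j = ∑_{i=1}^{j+1} (ν_i / (1 − ν₀)) a_{j+1−i}`. -/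
def qBcoef (μS μV : Measure ℝ) (lam : ℝ) (j : ℕ) : ℝ :=
  ∑ i ∈ Finset.Icc 1 (j + 1), qCoef μV lam i / (1 - qCoef μV lam 0) * qCoef μS lam (j + 1 - i)

/-- A positive measurable function is slowly varying at `+∞`. -/
def SlowlyVaryingAtTop (L : ℝ → ℝ) : Prop :=
  Measurable L ∧ (∀ x : ℝ, 0 < x → 0 < L x) ∧
    ∀ t : ℝ, 0 < t → Tendsto (fun x => L (t * x) / L x) atTop (nhds 1)

lemma nu0_lt_one (μV : Measure ℝ) [IsProbabilityMeasure μV] (hVsupp : μV (Set.Iio 0) = 0)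
    (lam : ℝ) (hlam : 0 < lam) (hVpos : 0 < μV (Set.Ioi 0)) :
    (∫ t, Real.exp (-lam * t) ∂μV) < 1 := by
  have hae : ∀ᵐ t ∂μV, 0 ≤ t := by
    rw [MeasureTheory.ae_iff]
    convert hVsupp using 2
    ext t; simp [Set.Iio, not_le]
  have hmeas : AEStronglyMeasurable (fun t => Real.exp (-lam * t)) μV :=
    (Real.continuous_exp.comp (continuous_const.mul continuous_id)).aestronglyMeasurable
  have hint : Integrable (fun t => Real.exp (-lam * t)) μV := by
    refine Integrable.mono' (integrable_const 1) hmeas ?_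
    filter_upwards [hae] with t ht
    rw [Real.norm_eq_abs, abs_of_pos (Real.exp_pos _)]
    exact Real.exp_le_one_iff.2 (by nlinarith)
  have hfint : Integrable (fun t => 1 - Real.exp (-lam * t)) μV :=
    (integrable_const 1).sub hint
  have hnn : 0 ≤ᵐ[μV] fun t => 1 - Real.exp (-lam * t) := by
    filter_upwards [hae] with t ht
    have : Real.exp (-lam * t) ≤ 1 := Real.exp_le_one_iff.2 (by nlinarith)
    show (0:ℝ) ≤ _
    linarith
  have hsupp : Set.Ioi (0:ℝ) ⊆ Function.support (fun t => 1 - Real.exp (-lam * t)) := by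
    intro t ht
    have : Real.exp (-lam * t) < 1 := by
      rw [Real.exp_lt_one_iff]; nlinarith [mem_Ioi.1 ht]
    simp only [Function.mem_support, neg_mul]
    rw [neg_mul] at this; intro h; linarith
  have hpos : 0 < ∫ t, (1 - Real.exp (-lam * t)) ∂μV := by
    rw [integral_pos_iff_support_of_nonneg_ae hnn hfint]
    exact lt_of_lt_of_le hVpos (measure_mono hsupp)
  have : ∫ t, (1 - Real.exp (-lam * t)) ∂μV = 1 - ∫ t, Real.exp (-lam * t) ∂μV := by
    rw [integral_sub (integrable_const 1) hint, integral_const]; simp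
  linarith [this ▸ hpos]

theorem stmt1
    (μS μV : Measure ℝ) [IsProbabilityMeasure μS] [IsProbabilityMeasure μV]
    (hSsupp : μS (Set.Iio 0) = 0) (hVsupp : μV (Set.Iio 0) = 0)
    (lam : ℝ) (hlam : 0 < lam)
    (hSint : Integrable (fun t => t) μS) (hVint : Integrable (fun t => t) μV)
    (ES EV : ℝ) (hES : ES = ∫ t, t ∂μS) (hEV : EV = ∫ t, t ∂μV)
    (hESpos : 0 < ES) (hEVpos : 0 < EV) (hVpos : 0 < μV (Set.Ioi 0))
    (ρ : ℝ) (hρdef : ρ = lam * ES)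
    (π : ℕ → ℝ) (hπnn : ∀ n, 0 ≤ π n) (hπne : π ≠ 0)
    (hinv : ∀ j : ℕ, π j = π 0 * qBcoef μS μV lam j +
      ∑ k ∈ Finset.Icc 1 (j + 1), π k * qCoef μS lam (j + 1 - k))
    (Ploss : ℕ → ℝ)
    (hPloss : ∀ N : ℕ, Ploss N =
      (EV * π 0 + (ES - lam⁻¹) * (1 - qCoef μV lam 0) * (∑ j ∈ Finset.range N, π j)) /
      (EV * π 0 + ES * (1 - qCoef μV lam 0) * (∑ j ∈ Finset.range N, π j)))
    (hdiv : Tendsto (fun N : ℕ => ∑ j ∈ Finset.range N, π j) atTop atTop)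
    (hρ1 : 1 ≤ ρ) :
    Tendsto (fun N : ℕ => (∑ j ∈ Finset.range N, π j) * (Ploss N - (1 - 1 / ρ))) atTop
      (𝓝 (EV * π 0 / (ρ * ES * (1 - qCoef μV lam 0)))) := by

  have hν0 : qCoef μV lam 0 < 1 := by
    have h := nu0_lt_one μV hVsupp lam hlam hVpos
    simpa [qCoef] using h
  set S : ℕ → ℝ := fun N => ∑ j ∈ Finset.range N, π j with hSdef
  have hρpos : (0:ℝ) < ρ := lt_of_lt_of_le one_pos hρ1
  set c : ℝ := EV * π 0 with hc
  have hcnn : 0 ≤ c := mul_nonneg hEVpos.le (hπnn 0)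
  set d : ℝ := 1 - qCoef μV lam 0 with hd
  have hdpos : 0 < d := sub_pos.2 hν0
  set B : ℝ := ES * d with hB
  have hBpos : 0 < B := mul_pos hESpos hdpos
  have hkey : ∀ᶠ N in atTop, S N * (Ploss N - (1 - 1 / ρ)) = c * S N / (ρ * (c + B * S N)) := by
    filter_upwards [hdiv.eventually_ge_atTop 1] with N hN
    have hDpos : 0 < c + B * S N := by nlinarith
    have hlamne : lam ≠ 0 := ne_of_gt hlam
    rw [hPloss N]
    change S N * ((c + (ES - lam⁻¹) * d * S N) / (c + B * S N) - (1 - 1 / ρ)) = c * S N / (ρ * (c + B * S N))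
    rw [hB] at hDpos ⊢
    rw [hρdef] at *
    field_simp
    ring
  have hlim : Tendsto (fun x : ℝ => c * x / (ρ * (c + B * x))) atTop (𝓝 (c / (ρ * B))) := by
    have h1 : Tendsto (fun x : ℝ => c / (ρ * (c / x + B))) atTop (𝓝 (c / (ρ * B))) := by
      have h0 : Tendsto (fun x : ℝ => c / x) atTop (𝓝 0) := tendsto_const_nhds.div_atTop tendsto_id
      have hden : Tendsto (fun x : ℝ => ρ * (c / x + B)) atTop (𝓝 (ρ * B)) := by
        have := (h0.add_const B).const_mul ρ
        simpa using this
      exact tendsto_const_nhds.div hden (by positivity)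
    refine h1.congr' ?_
    filter_upwards [eventually_ge_atTop (1:ℝ)] with x hx
    have hx0 : x ≠ 0 := by linarith
    have hDpos : 0 < c + B * x := by nlinarith
    field_simp
  have hfinal := hlim.comp hdiv
  have : Tendsto (fun N : ℕ => S N * (Ploss N - (1 - 1 / ρ))) atTop (𝓝 (c / (ρ * B))) :=
    hfinal.congr' (by filter_upwards [hkey] with N h; exact h.symm)
  have heq : c / (ρ * B) = EV * π 0 / (ρ * ES * (1 - qCoef μV lam 0)) := by
    rw [hc, hB, hd]; ring_nf
  exact heq ▸ this
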